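/- If x ≺ y for nonnegative vectors with nonincreasing components, then there exists a lower triangular row-stochastic matrix L with at most 2n−1 nonzero entries such that y = xL. -/

import Mathlib

open Finset Matrix

/-- Prefix sum of the first `k` components. -/
def psum {n : ℕ} (x : Fin n → ℝ) (k : ℕ) : ℝ :=
  ∑ i ∈ Finset.filter (fun i : Fin n => (i : ℕ) < k) Finset.univ, x i

/-- `x` is majorized by `y` (both assumed sorted nonincreasingly). -/
def Maj {n : ℕ} (x y : Fin n → ℝ) : Prop :=
  (∀ k, k < n → psum x k ≤ psum y k) ∧ (∑ i, x i) = ∑ i, y i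

/-- An A-transform: for `i < j` and `λ ∈ [0,1]`, replace `x i` by `x i + λ * x j`
and `x j` by `(1 - λ) * x j`. -/
def ATrans {n : ℕ} (x x' : Fin n → ℝ) : Prop :=
  ∃ (i j : Fin n) (lam : ℝ), i < j ∧ 0 ≤ lam ∧ lam ≤ 1 ∧
    x' = Function.update (Function.update x i (x i + lam * x j)) j ((1 - lam) * x j)

/-- A B-transform: for `i < j` and `λ ∈ [0,1]`, replace `y i` by `(1 - λ) * y i`
and `y j` by `y j + λ * y i`. -/
def BTrans {n : ℕ} (y y' : Fin n → ℝ) : Prop :=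
  ∃ (i j : Fin n) (lam : ℝ), i < j ∧ 0 ≤ lam ∧ lam ≤ 1 ∧
    y' = Function.update (Function.update y i ((1 - lam) * y i)) j (y j + lam * y i)

/-- Lower triangular row-stochastic matrix. -/
def LowerRS {n : ℕ} (L : Matrix (Fin n) (Fin n) ℝ) : Prop :=
  (∀ i j, 0 ≤ L i j) ∧ (∀ i j : Fin n, i < j → L i j = 0) ∧ (∀ i, ∑ j, L i j = 1)

/-- Upper triangular row-stochastic matrix. -/
def UpperRS {n : ℕ} (U : Matrix (Fin n) (Fin n) ℝ) : Prop :=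
  (∀ i j, 0 ≤ U i j) ∧ (∀ i j : Fin n, j < i → U i j = 0) ∧ (∀ i, ∑ j, U i j = 1)

lemma psum_zero {n : ℕ} (x : Fin n → ℝ) : psum x 0 = 0 := by simp [psum]

lemma psum_top {n : ℕ} (x : Fin n → ℝ) {k : ℕ} (hk : n ≤ k) : psum x k = ∑ i, x i := by
  unfold psum
  rw [Finset.filter_true_of_mem]
  intro i _; exact lt_of_lt_of_le i.isLt hk

lemma psum_mono {n : ℕ} (x : Fin n → ℝ) (hx : ∀ i, 0 ≤ x i) {a b : ℕ} (hab : a ≤ b) :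
    psum x a ≤ psum x b := by
  apply Finset.sum_le_sum_of_subset_of_nonneg
  · intro i hi
    simp only [Finset.mem_filter] at hi ⊢
    exact ⟨hi.1, lt_of_lt_of_le hi.2 hab⟩
  · intro i _ _; exact hx i

lemma psum_nonneg {n : ℕ} (x : Fin n → ℝ) (hx : ∀ i, 0 ≤ x i) (k : ℕ) : 0 ≤ psum x k :=
  Finset.sum_nonneg (fun i _ => hx i)

lemma psum_succ {n : ℕ} (x : Fin n → ℝ) {k : ℕ} (hk : k < n) :
    psum x (k + 1) = psum x k + x ⟨k, hk⟩ := by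
  unfold psum
  have h : Finset.filter (fun i : Fin n => (i : ℕ) < k + 1) Finset.univ
      = insert ⟨k, hk⟩ (Finset.filter (fun i : Fin n => (i : ℕ) < k) Finset.univ) := by
    ext i; simp [Fin.ext_iff]; omega
  rw [h, Finset.sum_insert (by simp)]
  ring

lemma fin_sum_telescope {n : ℕ} (g : ℕ → ℝ) :
    ∑ j : Fin n, (g ((j : ℕ) + 1) - g (j : ℕ)) = g n - g 0 := by
  rw [Fin.sum_univ_eq_sum_range (fun j => g (j + 1) - g j) n, Finset.sum_range_sub]

private theorem stmt8_aux {n : ℕ} (x y : Fin n → ℝ)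
    (hx0 : ∀ i, 0 ≤ x i) (hy0 : ∀ i, 0 ≤ y i)
    (hxs : Antitone x) (hys : Antitone y)
    (hmaj : (∀ k, k < n → psum x k ≤ psum y k) ∧ (∑ i, x i) = ∑ i, y i) :
    ∃ L : Matrix (Fin n) (Fin n) ℝ, ((∀ i j, 0 ≤ L i j) ∧ (∀ i j : Fin n, i < j → L i j = 0) ∧ (∀ i, ∑ j, L i j = 1)) ∧
      (Finset.filter (fun p : Fin n × Fin n => L p.1 p.2 ≠ 0) Finset.univ).card ≤ 2 * n - 1 ∧
      y = Matrix.vecMul x L := by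
  classical
  obtain ⟨hmaj1, hmaj2⟩ := hmaj
  have hxy : ∀ k : ℕ, psum x k ≤ psum y k := by
    intro k
    rcases lt_or_ge k n with h | h
    · exact hmaj1 k h
    · rw [psum_top x h, psum_top y h, hmaj2]
  have hxm : ∀ {a b : ℕ}, a ≤ b → psum x a ≤ psum x b := fun h => psum_mono x hx0 h
  have hym : ∀ {a b : ℕ}, a ≤ b → psum y a ≤ psum y b := fun h => psum_mono y hy0 h
  set F : ℕ → ℕ → ℝ := fun a b => min (psum x a) (psum y b) with hF
  set M : Fin n → Fin n → ℝ :=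
    fun i j => F ((i : ℕ) + 1) ((j : ℕ) + 1) - F ((i : ℕ) + 1) (j : ℕ)
      - F (i : ℕ) ((j : ℕ) + 1) + F (i : ℕ) (j : ℕ) with hM
  -- nonnegativity
  have hM0 : ∀ i j, 0 ≤ M i j := by
    intro i j
    have ha : psum x (i : ℕ) ≤ psum x ((i : ℕ) + 1) := hxm (Nat.le_succ _)
    have hd : psum y (j : ℕ) ≤ psum y ((j : ℕ) + 1) := hym (Nat.le_succ _)
    simp only [hM, hF]
    rcases le_total (psum x (i : ℕ)) (psum y (j : ℕ)) with h | h
    · have e1 : min (psum x (i : ℕ)) (psum y (j : ℕ)) = psum x (i : ℕ) := min_eq_left h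
      have e2 : min (psum x (i : ℕ)) (psum y ((j : ℕ) + 1)) = psum x (i : ℕ) :=
        min_eq_left (h.trans hd)
      have e3 : min (psum x ((i : ℕ) + 1)) (psum y (j : ℕ))
          ≤ min (psum x ((i : ℕ) + 1)) (psum y ((j : ℕ) + 1)) := min_le_min le_rfl hd
      linarith
    · have e1 : min (psum x (i : ℕ)) (psum y (j : ℕ)) = psum y (j : ℕ) := min_eq_right h
      have e2 : min (psum x ((i : ℕ) + 1)) (psum y (j : ℕ)) = psum y (j : ℕ) :=
        min_eq_right (h.trans ha)
      have e3 : min (psum x (i : ℕ)) (psum y ((j : ℕ) + 1))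
          ≤ min (psum x ((i : ℕ) + 1)) (psum y ((j : ℕ) + 1)) := min_le_min ha le_rfl
      linarith
  -- lower triangular
  have hMtri : ∀ i j : Fin n, i < j → M i j = 0 := by
    intro i j hij
    have h1 : (i : ℕ) + 1 ≤ (j : ℕ) := hij
    have e1 : psum x ((i : ℕ) + 1) ≤ psum y (j : ℕ) := (hxy _).trans (hym h1)
    have e2 : psum x (i : ℕ) ≤ psum y (j : ℕ) := (hxm (Nat.le_succ _)).trans e1
    simp only [hM, hF]
    rw [min_eq_left (e1.trans (hym (Nat.le_succ _))), min_eq_left e1,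
      min_eq_left (e2.trans (hym (Nat.le_succ _))), min_eq_left e2]
    ring
  -- boundary values of F
  have hFx : ∀ a : ℕ, a ≤ n → F a n = psum x a := by
    intro a ha
    apply min_eq_left
    calc psum x a ≤ psum x n := hxm ha
      _ ≤ psum y n := hxy n
  have hFy : ∀ b : ℕ, b ≤ n → F n b = psum y b := by
    intro b hb
    apply min_eq_right
    calc psum y b ≤ psum y n := hym hb
      _ = psum x n := by rw [psum_top x le_rfl, psum_top y le_rfl, hmaj2]
  have hF0r : ∀ a : ℕ, F a 0 = 0 := by
    intro a
    simp only [hF]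
    rw [psum_zero]
    exact min_eq_right (psum_nonneg x hx0 a)
  have hF0l : ∀ b : ℕ, F 0 b = 0 := by
    intro b
    simp only [hF]
    rw [psum_zero]
    exact min_eq_left (psum_nonneg y hy0 b)
  -- row sums
  have hrow : ∀ i : Fin n, ∑ j, M i j = x i := by
    intro i
    have tele := fin_sum_telescope (n := n) (fun t => F ((i : ℕ) + 1) t - F (i : ℕ) t)
    have e : ∑ j, M i j
        = F ((i : ℕ) + 1) n - F (i : ℕ) n - (F ((i : ℕ) + 1) 0 - F (i : ℕ) 0) := by
      rw [← tele]
      apply Finset.sum_congr rfl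
      intro j _
      simp only [hM]
      ring
    rw [e, hFx _ i.isLt, hFx _ (le_of_lt i.isLt), hF0r, hF0r,
      psum_succ x i.isLt, Fin.eta]
    ring
  -- column sums
  have hcol : ∀ j : Fin n, ∑ i, M i j = y j := by
    intro j
    have tele := fin_sum_telescope (n := n) (fun t => F t ((j : ℕ) + 1) - F t (j : ℕ))
    have e : ∑ i, M i j
        = F n ((j : ℕ) + 1) - F n (j : ℕ) - (F 0 ((j : ℕ) + 1) - F 0 (j : ℕ)) := by
      rw [← tele]
      apply Finset.sum_congr rfl
      intro i _
      simp only [hM]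
      ring
    rw [e, hFy _ j.isLt, hFy _ (le_of_lt j.isLt), hF0l, hF0l,
      psum_succ y j.isLt, Fin.eta]
    ring
  -- zero rows
  have hMrow0 : ∀ i j : Fin n, x i = 0 → M i j = 0 := by
    intro i j hxi
    have hs : ∑ j, M i j = 0 := by rw [hrow i, hxi]
    exact (Finset.sum_eq_zero_iff_of_nonneg (fun j _ => hM0 i j)).mp hs j (Finset.mem_univ j)
  -- support characterization
  have hMsupp : ∀ i j : Fin n, M i j ≠ 0 →
      psum y (j : ℕ) < psum x ((i : ℕ) + 1) ∧ psum x (i : ℕ) < psum y ((j : ℕ) + 1) := by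
    intro i j hne
    have ha : psum x (i : ℕ) ≤ psum x ((i : ℕ) + 1) := hxm (Nat.le_succ _)
    have hd : psum y (j : ℕ) ≤ psum y ((j : ℕ) + 1) := hym (Nat.le_succ _)
    constructor
    · by_contra h
      push_neg at h
      apply hne
      simp only [hM, hF]
      rw [min_eq_left (h.trans hd), min_eq_left h,
        min_eq_left ((ha.trans h).trans hd), min_eq_left (ha.trans h)]
      ring
    · by_contra h
      push_neg at h
      apply hne
      simp only [hM, hF]
      rw [min_eq_right (h.trans ha), min_eq_right ((hd.trans h).trans ha),
        min_eq_right h, min_eq_right (hd.trans h)]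
      ring
  -- the matrix L
  set L : Matrix (Fin n) (Fin n) ℝ :=
    fun i j => if x i = 0 then (if i = j then 1 else 0) else M i j / x i with hL
  have hLsupp : ∀ i j : Fin n, L i j ≠ 0 →
      (x i = 0 ∧ i = j) ∨ (x i ≠ 0 ∧ M i j ≠ 0) := by
    intro i j h
    simp only [hL] at h
    by_cases hxi : x i = 0
    · left
      refine ⟨hxi, ?_⟩
      by_contra hij
      simp [hxi, hij] at h
    · right
      refine ⟨hxi, ?_⟩
      intro hm
      simp [hxi, hm] at h
  refine ⟨L, ⟨?_, ?_, ?_⟩, ?_, ?_⟩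
  · -- nonneg
    intro i j
    simp only [hL]
    by_cases hxi : x i = 0
    · simp only [hxi, if_true]
      split <;> norm_num
    · simp only [hxi, if_false]
      exact div_nonneg (hM0 i j) (hx0 i)
  · -- triangular
    intro i j hij
    simp only [hL]
    by_cases hxi : x i = 0
    · simp [hxi, Fin.ne_of_lt hij]
    · simp [hxi, hMtri i j hij]
  · -- row stochastic
    intro i
    simp only [hL]
    by_cases hxi : x i = 0
    · simp [hxi]
    · simp only [hxi, if_false]
      rw [← Finset.sum_div, hrow, div_self hxi]
  · -- cardinality
    have := Finset.card_le_card_of_injOn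
      (f := fun p : Fin n × Fin n => (p.1 : ℕ) + (p.2 : ℕ))
      (s := Finset.filter (fun p : Fin n × Fin n => L p.1 p.2 ≠ 0) Finset.univ)
      (t := Finset.range (2 * n - 1))
      (by
        intro p hp
        simp only [Finset.mem_coe, Finset.mem_filter] at hp
        have h1 := p.1.isLt
        have h2 := p.2.isLt
        simp only [Finset.mem_coe, Finset.mem_range]
        omega)
      (by
        intro p hp q hq heq
        simp only [Finset.mem_coe, Finset.mem_filter] at hp hq
        have hv : (p.1 : ℕ) + (p.2 : ℕ) = (q.1 : ℕ) + (q.2 : ℕ) := heq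
        rcases hLsupp p.1 p.2 hp.2 with ⟨hxp, hpd⟩ | ⟨hxp, hMp⟩ <;>
          rcases hLsupp q.1 q.2 hq.2 with ⟨hxq, hqd⟩ | ⟨hxq, hMq⟩
        · have e1 : (p.1 : ℕ) = (p.2 : ℕ) := congrArg Fin.val hpd
          have e2 : (q.1 : ℕ) = (q.2 : ℕ) := congrArg Fin.val hqd
          exact Prod.ext (Fin.ext (by omega)) (Fin.ext (by omega))
        · exfalso
          have e1 : (p.1 : ℕ) = (p.2 : ℕ) := congrArg Fin.val hpd
          have hq1 : (q.1 : ℕ) < (p.1 : ℕ) := by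
            by_contra h
            push_neg at h
            exact hxq (le_antisymm (hxp ▸ hxs (show p.1 ≤ q.1 from h)) (hx0 q.1))
          have hq2 : (q.2 : ℕ) ≤ (q.1 : ℕ) := by
            by_contra h
            push_neg at h
            exact hMq (hMtri q.1 q.2 h)
          omega
        · exfalso
          have e2 : (q.1 : ℕ) = (q.2 : ℕ) := congrArg Fin.val hqd
          have hp1 : (p.1 : ℕ) < (q.1 : ℕ) := by
            by_contra h
            push_neg at h
            exact hxp (le_antisymm (hxq ▸ hxs (show q.1 ≤ p.1 from h)) (hx0 p.1))
          have hp2 : (p.2 : ℕ) ≤ (p.1 : ℕ) := by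
            by_contra h
            push_neg at h
            exact hMp (hMtri p.1 p.2 h)
          omega
        · rcases lt_trichotomy ((p.1 : ℕ)) ((q.1 : ℕ)) with h | h | h
          · exfalso
            have c1 := (hMsupp p.1 p.2 hMp).1
            have c2 := (hMsupp q.1 q.2 hMq).2
            have c3 : psum x ((p.1 : ℕ) + 1) ≤ psum x (q.1 : ℕ) := hxm h
            have c4 : psum y ((q.2 : ℕ) + 1) ≤ psum y (p.2 : ℕ) := hym (by omega)
            linarith
          · exact Prod.ext (Fin.ext h) (Fin.ext (by omega))
          · exfalso
            have c1 := (hMsupp q.1 q.2 hMq).1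
            have c2 := (hMsupp p.1 p.2 hMp).2
            have c3 : psum x ((q.1 : ℕ) + 1) ≤ psum x (p.1 : ℕ) := hxm h
            have c4 : psum y ((p.2 : ℕ) + 1) ≤ psum y (q.2 : ℕ) := hym (by omega)
            linarith)
    simpa using this
  · -- y = x L
    funext j
    rw [Matrix.vecMul, dotProduct]
    have e : ∀ i : Fin n, x i * L i j = M i j := by
      intro i
      simp only [hL]
      by_cases hxi : x i = 0
      · simp [hxi, hMrow0 i j hxi]
      · simp only [hxi, if_false]
        field_simp
    rw [Finset.sum_congr rfl (fun i _ => e i), hcol j]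


theorem stmt8 {n : ℕ} (x y : Fin n → ℝ)
    (hx0 : ∀ i, 0 ≤ x i) (hy0 : ∀ i, 0 ≤ y i)
    (hxs : Antitone x) (hys : Antitone y)
    (hmaj : Maj x y) :
    ∃ L : Matrix (Fin n) (Fin n) ℝ, LowerRS L ∧
      (Finset.filter (fun p : Fin n × Fin n => L p.1 p.2 ≠ 0) Finset.univ).card ≤ 2 * n - 1 ∧
      y = Matrix.vecMul x L := by
  exact stmt8_aux x y hx0 hy0 hxs hys hmaj
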